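/- Let X and Y be Banach spaces both satisfying the metric π-property. Then NAπ(X ⊗π Y) is ‖·‖π-dense in X ⊗π Y. -/

import Mathlib

noncomputable section

open scoped BigOperators

/-- The predicate stating that the Banach space `Z`, together with the bounded bilinear map
`t : X → Y → Z` and the correspondence `lift` between operators `X → Y*` and functionals on `Z`,
realizes the projective tensor product `X ⊗π Y`.  The field `norm_eq_sInf` says that the norm of
`Z` is the projective norm: `‖z‖π = inf {∑ₙ ‖xₙ‖‖yₙ‖ : z = ∑ₙ xₙ ⊗ yₙ}`, and the `lift` fields
encode the canonical isometric identification `(X ⊗π Y)* = L(X, Y*)`. -/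
structure IsProjTensorProduct (X Y Z : Type*)
    [NormedAddCommGroup X] [NormedSpace ℝ X]
    [NormedAddCommGroup Y] [NormedSpace ℝ Y]
    [NormedAddCommGroup Z] [NormedSpace ℝ Z]
    (t : X →L[ℝ] Y →L[ℝ] Z)
    (lift : (X →L[ℝ] (Y →L[ℝ] ℝ)) → (Z →L[ℝ] ℝ)) : Prop where
  norm_tmul_le : ∀ (x : X) (y : Y), ‖t x y‖ ≤ ‖x‖ * ‖y‖
  exists_rep : ∀ z : Z, ∃ (x : ℕ → X) (y : ℕ → Y),
    Summable (fun n => ‖x n‖ * ‖y n‖) ∧ HasSum (fun n => t (x n) (y n)) z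
  norm_eq_sInf : ∀ z : Z, ‖z‖ = sInf {r : ℝ | ∃ (x : ℕ → X) (y : ℕ → Y),
    Summable (fun n => ‖x n‖ * ‖y n‖) ∧ HasSum (fun n => t (x n) (y n)) z ∧
    r = ∑' n, ‖x n‖ * ‖y n‖}
  lift_tmul : ∀ (G : X →L[ℝ] (Y →L[ℝ] ℝ)) (x : X) (y : Y), lift G (t x y) = G x y
  norm_lift : ∀ G : X →L[ℝ] (Y →L[ℝ] ℝ), ‖lift G‖ = ‖G‖
  lift_surjective : Function.Surjective lift

/-- An element `z ∈ X ⊗π Y` attains its projective norm if it admits a representation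
`z = ∑ₙ xₙ ⊗ yₙ` with `∑ₙ ‖xₙ‖‖yₙ‖ < ∞` and `‖z‖π = ∑ₙ ‖xₙ‖‖yₙ‖`. -/
def AttainsProjNorm {X Y Z : Type*}
    [NormedAddCommGroup X] [NormedSpace ℝ X]
    [NormedAddCommGroup Y] [NormedSpace ℝ Y]
    [NormedAddCommGroup Z] [NormedSpace ℝ Z]
    (t : X →L[ℝ] Y →L[ℝ] Z) (z : Z) : Prop :=
  ∃ (x : ℕ → X) (y : ℕ → Y),
    Summable (fun n => ‖x n‖ * ‖y n‖) ∧ HasSum (fun n => t (x n) (y n)) z ∧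
    ‖z‖ = ∑' n, ‖x n‖ * ‖y n‖

/-- A Banach space `X` has the metric π-property: for every ε > 0 and finite set of unit
vectors there is a finite dimensional `1`-complemented subspace (the range of a norm-one
projection) containing ε-approximations of all of them. -/
def MetricPiProperty (X : Type*) [NormedAddCommGroup X] [NormedSpace ℝ X] : Prop :=
  ∀ ε : ℝ, 0 < ε → ∀ s : Finset X, (∀ x ∈ s, ‖x‖ = 1) →
    ∃ P : X →L[ℝ] X, IsIdempotentElem P ∧ ‖P‖ = 1 ∧
      FiniteDimensional ℝ (LinearMap.range (P : X →ₗ[ℝ] X)) ∧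
      ∀ x ∈ s, ∃ x' ∈ LinearMap.range (P : X →ₗ[ℝ] X), ‖x - x'‖ < ε


set_option linter.unusedSectionVars false


open Module Set

lemma sum_extend_emb {α β M : Type*} [Fintype α] [Fintype β] [AddCommMonoid M]
    [DecidableEq β] (ι : α ↪ β) (F : β → M) (G : α → M)
    (h1 : ∀ a, F (ι a) = G a) (h0 : ∀ i, (∀ a, ι a ≠ i) → F i = 0) :
    ∑ i, F i = ∑ a, G a := by
  calc ∑ i, F i = ∑ i ∈ Finset.univ.image ι, F i :=
        (Finset.sum_subset (Finset.subset_univ _) (fun i _ hi =>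
          h0 i (fun a ha => hi (Finset.mem_image.2 ⟨a, Finset.mem_univ _, ha⟩)))).symm
    _ = ∑ a, F (ι a) := Finset.sum_image (fun x _ y _ h => ι.injective h)
    _ = ∑ a, G a := by simp [h1]

lemma isCompact_convexHull_of_isCompact' {W : Type*} [NormedAddCommGroup W] [NormedSpace ℝ W]
    [FiniteDimensional ℝ W] {A : Set W} (hA : IsCompact A) (hne : A.Nonempty) :
    IsCompact (convexHull ℝ A) := by
  classical
  obtain ⟨a₀, ha₀⟩ := hne
  set d := finrank ℝ W + 1 with hd
  have hcont : Continuous fun p : (Fin d → ℝ) × (Fin d → W) => ∑ i, p.1 i • p.2 i := by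
    fun_prop
  have hcomp : IsCompact ((stdSimplex ℝ (Fin d)) ×ˢ (Set.univ.pi fun _ : Fin d => A)) :=
    (isCompact_stdSimplex ℝ _).prod (isCompact_univ_pi fun _ => hA)
  have himg : (fun p : (Fin d → ℝ) × (Fin d → W) => ∑ i, p.1 i • p.2 i) ''
      ((stdSimplex ℝ (Fin d)) ×ˢ (Set.univ.pi fun _ : Fin d => A)) = convexHull ℝ A := by
    apply Set.Subset.antisymm
    · rintro x ⟨⟨w, a⟩, ⟨hw, ha⟩, rfl⟩
      exact mem_convexHull_of_exists_fintype w a (fun i => hw.1 i) hw.2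
        (fun i => ha i (Set.mem_univ i)) rfl
    · intro x hx
      rw [convexHull_eq_union] at hx
      simp only [Set.mem_iUnion] at hx
      obtain ⟨t, hts, hai, hxt⟩ := hx
      have hcard : Fintype.card {y // y ∈ t} ≤ d := by
        refine hai.card_le_finrank_succ.trans ?_
        have := Submodule.finrank_le (vectorSpan ℝ (Set.range (Subtype.val : {y // y ∈ t} → W)))
        omega
      rw [Finset.convexHull_eq] at hxt
      obtain ⟨w, hw0, hw1, hxc⟩ := hxt
      rw [Finset.centerMass_eq_of_sum_1 _ _ hw1] at hxc
      obtain ⟨ι⟩ := Function.Embedding.nonempty_of_card_le (α := {y // y ∈ t}) (β := Fin d) (by simpa using hcard)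
      set wd : Fin d → ℝ := Function.extend ι (fun y => w y.1) 0 with hwd
      set ad : Fin d → W := Function.extend ι (fun y => (y.1 : W)) (fun _ => a₀) with had
      have hwd1 : ∀ y, wd (ι y) = w y.1 := fun y => ι.injective.extend_apply _ _ _
      have hwd0 : ∀ i, (∀ a, ι a ≠ i) → wd i = 0 := fun i hi => by
        rw [hwd, Function.extend_apply' _ _ _ (by rintro ⟨a, rfl⟩; exact hi a rfl)]; rfl
      have had1 : ∀ y, ad (ι y) = y.1 := fun y => ι.injective.extend_apply _ _ _
      refine ⟨⟨wd, ad⟩, ⟨⟨fun i => ?_, ?_⟩, fun i _ => ?_⟩, ?_⟩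
      · show 0 ≤ wd i
        by_cases hi : ∃ y, ι y = i
        · obtain ⟨y, rfl⟩ := hi; rw [hwd1]; exact hw0 _ y.2
        · push_neg at hi; rw [hwd0 i hi]
      · show ∑ i, wd i = 1
        rw [sum_extend_emb ι wd (fun y => w y.1) hwd1 hwd0, ← hw1,
          Finset.univ_eq_attach, Finset.sum_attach]
      · show ad i ∈ A
        by_cases hi : ∃ y, ι y = i
        · obtain ⟨y, rfl⟩ := hi; rw [had1]; exact hts y.2
        · push_neg at hi
          rw [had, Function.extend_apply' _ _ _ (by rintro ⟨a, rfl⟩; exact hi a rfl)]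
          exact ha₀
      · show ∑ i, wd i • ad i = x
        rw [sum_extend_emb ι (fun i => wd i • ad i) (fun y => w y.1 • (y.1 : W))
          (fun y => by simp [hwd1, had1]) (fun i hi => by simp [hwd0 i hi]),
          Finset.univ_eq_attach, ← hxc]
        simpa using Finset.sum_attach t (fun y => w y • y)
  rw [← himg]; exact hcomp.image hcont

open Module Set

section Helpers

lemma sum_extend_emb' {α β M : Type*} [Fintype α] [AddCommMonoid M]
    [DecidableEq β] (ι : α ↪ β) (F : β → M) (G : α → M)
    (h1 : ∀ a, F (ι a) = G a) :
    ∑ i ∈ Finset.univ.image ι, F i = ∑ a, G a := by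
  rw [Finset.sum_image (fun x _ y _ h => ι.injective h)]
  simp [h1]

lemma convex_sum_mem_of_sum_le_one {E : Type*} [AddCommGroup E] [Module ℝ E] {C : Set E}
    (hC : Convex ℝ C) (h0 : (0 : E) ∈ C) {ι : Type*} (F : Finset ι) (lam : ι → ℝ) (a : ι → E)
    (hl : ∀ i ∈ F, 0 ≤ lam i) (ha : ∀ i ∈ F, a i ∈ C) (hsum : ∑ i ∈ F, lam i ≤ 1) :
    (∑ i ∈ F, lam i • a i) ∈ C := by
  rcases eq_or_lt_of_le (Finset.sum_nonneg hl) with hc | hc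
  · have : ∀ i ∈ F, lam i = 0 := (Finset.sum_eq_zero_iff_of_nonneg hl).1 hc.symm
    rw [Finset.sum_congr rfl (fun i hi => by rw [this i hi, zero_smul])]
    simpa using h0
  · set c := ∑ i ∈ F, lam i with hcdef
    have hu : (∑ i ∈ F, (lam i / c) • a i) ∈ C := by
      refine hC.sum_mem (fun i hi => div_nonneg (hl i hi) hc.le) ?_ ha
      rw [← Finset.sum_div, ← hcdef, div_self hc.ne']
    have hcomb := hC hu h0 hc.le (by linarith : (0:ℝ) ≤ 1 - c) (by ring)
    have : c • (∑ i ∈ F, (lam i / c) • a i) + (1 - c) • (0 : E) = ∑ i ∈ F, lam i • a i := by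
      rw [smul_zero, add_zero, Finset.smul_sum]
      refine Finset.sum_congr rfl fun i hi => ?_
      rw [smul_smul, mul_div_cancel₀ _ hc.ne']
    rwa [this] at hcomb

end Helpers

section Aux
variable {X Y Z : Type*} [NormedAddCommGroup X] [NormedSpace ℝ X] [CompleteSpace X]
  [NormedAddCommGroup Y] [NormedSpace ℝ Y] [CompleteSpace Y]
  [NormedAddCommGroup Z] [NormedSpace ℝ Z] [CompleteSpace Z]
  {t : X →L[ℝ] Y →L[ℝ] Z} {lift : (X →L[ℝ] (Y →L[ℝ] ℝ)) → (Z →L[ℝ] ℝ)}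

/-- The representation-sums set is bounded below by 0. -/
lemma repSet_bddBelow (z : Z) : BddBelow {r : ℝ | ∃ (x : ℕ → X) (y : ℕ → Y),
    Summable (fun n => ‖x n‖ * ‖y n‖) ∧ HasSum (fun n => t (x n) (y n)) z ∧
    r = ∑' n, ‖x n‖ * ‖y n‖} := by
  refine ⟨0, fun r hr => ?_⟩
  obtain ⟨x, y, hs, -, rfl⟩ := hr
  exact tsum_nonneg fun n => mul_nonneg (norm_nonneg _) (norm_nonneg _)

lemma summable_tmul (h : IsProjTensorProduct X Y Z t lift) {x : ℕ → X} {y : ℕ → Y}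
    (hs : Summable fun n => ‖x n‖ * ‖y n‖) :
    Summable fun n => t (x n) (y n) := by
  refine Summable.of_norm (hs.of_nonneg_of_le (fun n => norm_nonneg _)
    (fun n => h.norm_tmul_le _ _))

lemma norm_le_rep (h : IsProjTensorProduct X Y Z t lift) {z : Z} {x : ℕ → X} {y : ℕ → Y}
    (hs : Summable fun n => ‖x n‖ * ‖y n‖) (hz : HasSum (fun n => t (x n) (y n)) z) :
    ‖z‖ ≤ ∑' n, ‖x n‖ * ‖y n‖ := by
  rw [h.norm_eq_sInf z]
  exact csInf_le (repSet_bddBelow z) ⟨x, y, hs, hz, rfl⟩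

lemma exists_rep_lt (h : IsProjTensorProduct X Y Z t lift) {z : Z} {r : ℝ} (hr : ‖z‖ < r) :
    ∃ (x : ℕ → X) (y : ℕ → Y), Summable (fun n => ‖x n‖ * ‖y n‖) ∧
      HasSum (fun n => t (x n) (y n)) z ∧ ∑' n, ‖x n‖ * ‖y n‖ < r := by
  rw [h.norm_eq_sInf z] at hr
  obtain ⟨x0, y0, hs0, hz0⟩ := h.exists_rep z
  have hne : Set.Nonempty {r : ℝ | ∃ (x : ℕ → X) (y : ℕ → Y),
      Summable (fun n => ‖x n‖ * ‖y n‖) ∧ HasSum (fun n => t (x n) (y n)) z ∧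
      r = ∑' n, ‖x n‖ * ‖y n‖} := ⟨_, x0, y0, hs0, hz0, rfl⟩
  obtain ⟨a, ⟨x, y, hs, hz, rfl⟩, ha⟩ := exists_lt_of_csInf_lt hne hr
  exact ⟨x, y, hs, hz, ha⟩

end Aux

section Attains
open Module Set
variable {X Y Z : Type*} [NormedAddCommGroup X] [NormedSpace ℝ X] [CompleteSpace X]
  [NormedAddCommGroup Y] [NormedSpace ℝ Y] [CompleteSpace Y]
  [NormedAddCommGroup Z] [NormedSpace ℝ Z] [CompleteSpace Z]
  {t : X →L[ℝ] Y →L[ℝ] Z} {lift : (X →L[ℝ] (Y →L[ℝ] ℝ)) → (Z →L[ℝ] ℝ)}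

set_option maxHeartbeats 2000000 in
lemma attains_of_mem_span (h : IsProjTensorProduct X Y Z t lift)
    (P : X →L[ℝ] X) (Q : Y →L[ℝ] Y)
    (hP : IsIdempotentElem P) (hPn : ‖P‖ = 1) (hPf : FiniteDimensional ℝ (LinearMap.range (P : X →ₗ[ℝ] X)))
    (hQ : IsIdempotentElem Q) (hQn : ‖Q‖ = 1) (hQf : FiniteDimensional ℝ (LinearMap.range (Q : Y →ₗ[ℝ] Y)))
    {w : Z} (hw : w ∈ Submodule.span ℝ
      (Set.image2 (fun m n => t m n) ((LinearMap.range (P : X →ₗ[ℝ] X) : Submodule ℝ X) : Set X)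
        ((LinearMap.range (Q : Y →ₗ[ℝ] Y) : Submodule ℝ Y) : Set Y))) :
    AttainsProjNorm t w := by
  classical
  haveI := hPf; haveI := hQf
  set Ms : Submodule ℝ X := LinearMap.range (P : X →ₗ[ℝ] X) with hMs
  set Ns : Submodule ℝ Y := LinearMap.range (Q : Y →ₗ[ℝ] Y) with hNs
  set sZ : Set Z := Set.image2 (fun m n => t m n) (Ms : Set X) (Ns : Set Y) with hsZ
  set W : Submodule ℝ Z := Submodule.span ℝ sZ with hW
  -- P and Q fix their ranges
  have hfixP : ∀ m ∈ Ms, P m = m := by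
    rintro m ⟨u, rfl⟩
    have := congrArg (fun f : X →L[ℝ] X => f u) hP
    simpa [ContinuousLinearMap.mul_apply] using this
  have hfixQ : ∀ n ∈ Ns, Q n = n := by
    rintro n ⟨u, rfl⟩
    have := congrArg (fun f : Y →L[ℝ] Y => f u) hQ
    simpa [ContinuousLinearMap.mul_apply] using this
  -- norms of P x, Q y
  have hPle : ∀ x : X, ‖P x‖ ≤ ‖x‖ := fun x => by
    simpa [hPn] using P.le_opNorm x
  have hQle : ∀ y : Y, ‖Q y‖ ≤ ‖y‖ := fun y => by
    simpa [hQn] using Q.le_opNorm y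
  -- membership of elementary tensors in W
  have hmemW : ∀ (m : X), m ∈ Ms → ∀ (n : Y), n ∈ Ns → t m n ∈ W := fun m hm n hn =>
    Submodule.subset_span (Set.mem_image2_of_mem hm hn)
  -- W is finite dimensional
  haveI hWfd : FiniteDimensional ℝ W := by
    let B : Ms →ₗ[ℝ] Ns →ₗ[ℝ] Z := LinearMap.mk₂ ℝ (fun m n => t m.1 n.1)
      (fun m₁ m₂ n => by simp) (fun c m n => by simp) (fun m n₁ n₂ => by simp)
      (fun c m n => by simp)
    have hle : W ≤ LinearMap.range (TensorProduct.lift B) := by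
      rw [hW, Submodule.span_le]
      rintro z ⟨m, hm, n, hn, rfl⟩
      exact ⟨(⟨m, hm⟩ : Ms) ⊗ₜ[ℝ] (⟨n, hn⟩ : Ns), by simp [B]⟩
    exact Submodule.finiteDimensional_of_le hle
  -- the compact set A in W and its convex hull K in Z
  have hballmem : ∀ (p : Ms × Ns), t p.1.1 p.2.1 ∈ W := fun p => hmemW _ p.1.2 _ p.2.2
  set A : Set W := (fun p : Ms × Ns => (⟨t p.1.1 p.2.1, hballmem p⟩ : W)) ''
    (Metric.closedBall 0 1 ×ˢ Metric.closedBall 0 1) with hA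
  have hAcomp : IsCompact A := by
    refine ((isCompact_closedBall (0 : Ms) 1).prod (isCompact_closedBall (0 : Ns) 1)).image ?_
    refine Continuous.subtype_mk ?_ _
    have : Continuous fun p : Ms × Ns => ((p.1 : X), (p.2 : Y)) := by fun_prop
    exact (t.continuous₂.comp this)
  have hA0 : (0 : W) ∈ A := by
    refine ⟨(0, 0), by simp, ?_⟩
    simp
  have hKcomp : IsCompact ((Subtype.val : W → Z) '' (convexHull ℝ A)) :=
    ((isCompact_convexHull_of_isCompact' hAcomp ⟨0, hA0⟩).image continuous_subtype_val)
  set K : Set Z := (Subtype.val : W → Z) '' (convexHull ℝ A) with hK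
  have hKclosed : IsClosed K := hKcomp.isClosed
  -- key duality lemma
  have hkey : ∀ (G : X →L[ℝ] (Y →L[ℝ] ℝ)) (u : Z), u ∈ W →
      lift ((((ContinuousLinearMap.compL ℝ Y Y ℝ).flip Q)).comp (G.comp P)) u = lift G u := by
    intro G u hu
    refine Submodule.span_induction ?_ ?_ ?_ ?_ hu
    · rintro z ⟨m, hm, n, hn, rfl⟩
      rw [h.lift_tmul, h.lift_tmul]
      show G (P m) (Q n) = G m n
      rw [hfixP m hm, hfixQ n hn]
    · simp
    · intro a b _ _ ha hb; rw [map_add, map_add, ha, hb]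
    · intro c a _ ha; rw [map_smul, map_smul, ha]
  -- finite representations with small sum are in K
  have hmemK_fin : ∀ (F : Finset ℕ) (m : ℕ → X) (n : ℕ → Y),
      (∀ i ∈ F, m i ∈ Ms) → (∀ i ∈ F, n i ∈ Ns) → (∑ i ∈ F, ‖m i‖ * ‖n i‖) ≤ 1 →
      (∑ i ∈ F, t (m i) (n i)) ∈ K := by
    intro F m n hm hn hsum
    have hterm : ∀ i ∈ F, t (m i) (n i) ∈ W := fun i hi => hmemW _ (hm i hi) _ (hn i hi)
    set wv : ℕ → W := fun i => if hi : i ∈ F then ⟨t (m i) (n i), hterm i hi⟩ else 0 with hwv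
    set a : ℕ → W := fun i => if hi : i ∈ F then
        (if h0 : ‖m i‖ * ‖n i‖ = 0 then 0 else
          ⟨t (‖m i‖⁻¹ • m i) (‖n i‖⁻¹ • n i),
            hmemW _ (Ms.smul_mem _ (hm i hi)) _ (Ns.smul_mem _ (hn i hi))⟩)
      else 0 with ha'
    have haC : ∀ i ∈ F, a i ∈ convexHull ℝ A := by
      intro i hi
      rw [ha']
      simp only [dif_pos hi]
      by_cases h0 : ‖m i‖ * ‖n i‖ = 0
      · rw [dif_pos h0]; exact subset_convexHull ℝ A hA0
      · rw [dif_neg h0]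
        refine subset_convexHull ℝ A ?_
        have hm0 : ‖m i‖ ≠ 0 := fun hc => h0 (by rw [hc, zero_mul])
        have hn0 : ‖n i‖ ≠ 0 := fun hc => h0 (by rw [hc, mul_zero])
        refine ⟨(⟨‖m i‖⁻¹ • m i, Ms.smul_mem _ (hm i hi)⟩, ⟨‖n i‖⁻¹ • n i, Ns.smul_mem _ (hn i hi)⟩), ?_, rfl⟩
        constructor
        · rw [Metric.mem_closedBall, dist_zero_right]
          show ‖‖m i‖⁻¹ • m i‖ ≤ 1
          rw [norm_smul, norm_inv, norm_norm, inv_mul_cancel₀ hm0]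
        · rw [Metric.mem_closedBall, dist_zero_right]
          show ‖‖n i‖⁻¹ • n i‖ ≤ 1
          rw [norm_smul, norm_inv, norm_norm, inv_mul_cancel₀ hn0]
    have heq : ∀ i ∈ F, wv i = (‖m i‖ * ‖n i‖) • a i := by
      intro i hi
      apply Subtype.ext
      rw [hwv, ha']
      simp only [dif_pos hi]
      by_cases h0 : ‖m i‖ * ‖n i‖ = 0
      · rw [dif_pos h0]
        show t (m i) (n i) = ((‖m i‖ * ‖n i‖) • (0 : W) : W)
        rcases mul_eq_zero.1 h0 with hc | hc
        · rw [norm_eq_zero.1 hc]; simp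
        · rw [norm_eq_zero.1 hc]; simp
      · rw [dif_neg h0]
        show t (m i) (n i) = (‖m i‖ * ‖n i‖) • t (‖m i‖⁻¹ • m i) (‖n i‖⁻¹ • n i)
        have hm0 : ‖m i‖ ≠ 0 := fun hc => h0 (by rw [hc, zero_mul])
        have hn0 : ‖n i‖ ≠ 0 := fun hc => h0 (by rw [hc, mul_zero])
        have hrw : t (‖m i‖⁻¹ • m i) (‖n i‖⁻¹ • n i)
            = (‖m i‖⁻¹ * ‖n i‖⁻¹) • t (m i) (n i) := by
          simp only [map_smul, ContinuousLinearMap.smul_apply, smul_smul]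
          ring_nf
        rw [hrw, smul_smul, show ‖m i‖ * ‖n i‖ * (‖m i‖⁻¹ * ‖n i‖⁻¹) = 1 by field_simp,
          one_smul]
    have hhull : (∑ i ∈ F, wv i) ∈ convexHull ℝ A := by
      rw [Finset.sum_congr rfl heq]
      exact convex_sum_mem_of_sum_le_one (convex_convexHull ℝ A)
        (subset_convexHull ℝ A hA0) F _ a (fun i _ => by positivity) haC hsum
    refine ⟨∑ i ∈ F, wv i, hhull, ?_⟩
    rw [Submodule.coe_sum]
    refine Finset.sum_congr rfl fun i hi => ?_
    rw [hwv]
    simp only [dif_pos hi]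
  -- elements of W of norm < 1 are in K
  have hmemK_lt : ∀ u : Z, u ∈ W → ‖u‖ < 1 → u ∈ K := by
    intro u huW hu
    obtain ⟨x, y, hsxy, hzxy, hlt⟩ := exists_rep_lt h hu
    have hple : ∀ k, ‖P (x k)‖ * ‖Q (y k)‖ ≤ ‖x k‖ * ‖y k‖ := fun k =>
      mul_le_mul (hPle _) (hQle _) (norm_nonneg _) (norm_nonneg _)
    have hspq : Summable fun k => ‖P (x k)‖ * ‖Q (y k)‖ :=
      hsxy.of_nonneg_of_le (fun k => by positivity) hple
    have hsum2 : Summable fun k => t (P (x k)) (Q (y k)) := summable_tmul h hspq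
    have hv' := hsum2.hasSum
    have hvu : (∑' k, t (P (x k)) (Q (y k))) = u := by
      rw [NormedSpace.eq_iff_forall_dual_eq ℝ]
      intro g
      obtain ⟨G, rfl⟩ := h.lift_surjective g
      set G' := (((ContinuousLinearMap.compL ℝ Y Y ℝ).flip Q)).comp (G.comp P) with hG'
      have hGv : lift G (∑' k, t (P (x k)) (Q (y k))) = ∑' k, G (P (x k)) (Q (y k)) := by
        rw [← (hv'.mapL (lift G)).tsum_eq]
        congr 1; funext k; exact h.lift_tmul _ _ _
      have hG'u : lift G' u = ∑' k, G (P (x k)) (Q (y k)) := by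
        rw [← (hzxy.mapL (lift G')).tsum_eq]
        congr 1; funext k
        rw [h.lift_tmul]
        rfl
      rw [hGv, ← hkey G u huW, ← hG']
      exact hG'u.symm
    rw [hvu] at hv'
    refine hKclosed.mem_of_tendsto hv'.tendsto_sum_nat (Filter.Eventually.of_forall fun j => ?_)
    refine hmemK_fin (Finset.range j) _ _ (fun i _ => ⟨x i, rfl⟩) (fun i _ => ⟨y i, rfl⟩) ?_
    calc ∑ i ∈ Finset.range j, ‖P (x i)‖ * ‖Q (y i)‖
        ≤ ∑ i ∈ Finset.range j, ‖x i‖ * ‖y i‖ := Finset.sum_le_sum (fun i _ => hple i)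
      _ ≤ ∑' i, ‖x i‖ * ‖y i‖ := Summable.sum_le_tsum _ (fun i _ => by positivity) hsxy
      _ ≤ 1 := hlt.le
  -- elements of W of norm ≤ 1 are in K
  have hmemK_le : ∀ u : Z, u ∈ W → ‖u‖ ≤ 1 → u ∈ K := by
    intro u huW hu
    have htend : Filter.Tendsto (fun j : ℕ => (1 - 1 / ((j : ℝ) + 1)) • u)
        Filter.atTop (nhds u) := by
      have h1 : Filter.Tendsto (fun j : ℕ => 1 - 1 / ((j : ℝ) + 1)) Filter.atTop (nhds 1) := by
        simpa using Filter.Tendsto.const_sub (1 : ℝ) tendsto_one_div_add_atTop_nhds_zero_nat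
      simpa using h1.smul tendsto_const_nhds (f := fun j : ℕ => 1 - 1/((j:ℝ)+1)) (g := fun _ : ℕ => u)
    refine hKclosed.mem_of_tendsto htend (Filter.Eventually.of_forall fun j => ?_)
    refine hmemK_lt _ (W.smul_mem _ huW) ?_
    have hj0 : (0:ℝ) < 1 / ((j : ℝ) + 1) := by positivity
    have hj1 : 1 / ((j : ℝ) + 1) ≤ 1 := by
      rw [div_le_one (by positivity)]; linarith [Nat.cast_nonneg (α := ℝ) j]
    rw [norm_smul]
    have : |1 - 1 / ((j : ℝ) + 1)| = 1 - 1 / ((j : ℝ) + 1) := abs_of_nonneg (by linarith)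
    rw [Real.norm_eq_abs, this]
    nlinarith [norm_nonneg u]
  -- conclusion
  by_cases hw0 : w = 0
  · subst hw0
    refine ⟨fun _ => 0, fun _ => 0, by simpa using summable_zero, by simpa using hasSum_zero, by simp⟩
  · have hc : 0 < ‖w‖ := norm_pos_iff.2 hw0
    set c := ‖w‖ with hcdef
    have huW : c⁻¹ • w ∈ W := W.smul_mem _ hw
    have hun : ‖c⁻¹ • w‖ ≤ 1 := by
      rw [norm_smul, norm_inv, norm_norm, ← hcdef, inv_mul_cancel₀ hc.ne']
    obtain ⟨uW, huhull, huval⟩ := hmemK_le _ huW hun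
    rw [mem_convexHull_iff_exists_fintype] at huhull
    obtain ⟨ι, hfin, wgt, zpt, hwgt0, hwgt1, hzptA, hzsum⟩ := huhull
    letI := hfin
    have hex : ∀ i, ∃ p : Ms × Ns, (p ∈ (Metric.closedBall 0 1 ×ˢ Metric.closedBall 0 1 :
        Set (Ms × Ns))) ∧ ((⟨t p.1.1 p.2.1, hballmem p⟩ : W) = zpt i) := fun i => hzptA i
    choose p hpball hpeq using hex
    have hpm : ∀ i, ‖((p i).1 : X)‖ ≤ 1 := fun i => by
      have := (hpball i).1
      rwa [Metric.mem_closedBall, dist_zero_right] at this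
    have hpn : ∀ i, ‖((p i).2 : Y)‖ ≤ 1 := fun i => by
      have := (hpball i).2
      rwa [Metric.mem_closedBall, dist_zero_right] at this
    set e : ι ↪ ℕ := (Fintype.equivFin ι).toEmbedding.trans Fin.valEmbedding with he
    set xseq : ℕ → X := Function.extend e (fun i => (c * wgt i) • ((p i).1 : X)) 0 with hxseq
    set yseq : ℕ → Y := Function.extend e (fun i => ((p i).2 : Y)) 0 with hyseq
    have hx1 : ∀ i, xseq (e i) = (c * wgt i) • ((p i).1 : X) := fun i =>
      e.injective.extend_apply _ _ _
    have hy1 : ∀ i, yseq (e i) = ((p i).2 : Y) := fun i => e.injective.extend_apply _ _ _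
    have hx0 : ∀ k ∉ Finset.univ.image e, xseq k = 0 := by
      intro k hk
      rw [hxseq, Function.extend_apply' _ _ _ ?_]
      · rfl
      · rintro ⟨i, rfl⟩; exact hk (Finset.mem_image.2 ⟨i, Finset.mem_univ _, rfl⟩)
    have hnorm0 : ∀ k ∉ Finset.univ.image e, ‖xseq k‖ * ‖yseq k‖ = 0 := fun k hk => by
      rw [hx0 k hk, norm_zero, zero_mul]
    have hterm0 : ∀ k ∉ Finset.univ.image e, t (xseq k) (yseq k) = 0 := fun k hk => by
      rw [hx0 k hk, map_zero, ContinuousLinearMap.zero_apply]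
    have hsumm : Summable fun k => ‖xseq k‖ * ‖yseq k‖ := summable_of_ne_finset_zero hnorm0
    -- the sum equals w
    have hval : (uW : Z) = ∑ i : ι, wgt i • t ((p i).1 : X) ((p i).2 : Y) := by
      rw [← hzsum, Submodule.coe_sum]
      refine Finset.sum_congr rfl fun i _ => ?_
      rw [Submodule.coe_smul]
      congr 1
      rw [← hpeq i]
    have hw_eq : ∑ k ∈ Finset.univ.image e, t (xseq k) (yseq k) = w := by
      rw [sum_extend_emb' e (fun k => t (xseq k) (yseq k))
        (fun i => t ((c * wgt i) • ((p i).1 : X)) ((p i).2 : Y))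
        (fun i => by simp only [hx1, hy1])]
      have : ∀ i : ι, t ((c * wgt i) • ((p i).1 : X)) ((p i).2 : Y)
          = c • (wgt i • t ((p i).1 : X) ((p i).2 : Y)) := fun i => by
        rw [map_smul, ContinuousLinearMap.smul_apply, smul_smul, mul_smul]
      rw [Finset.sum_congr rfl fun i _ => this i, ← Finset.smul_sum, ← hval, huval,
        smul_smul, mul_inv_cancel₀ hc.ne', one_smul]
    have hhs : HasSum (fun k => t (xseq k) (yseq k)) w := by
      have := hasSum_sum_of_ne_finset_zero (L := SummationFilter.unconditional ℕ) hterm0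
      rwa [hw_eq] at this
    refine ⟨xseq, yseq, hsumm, hhs, le_antisymm (norm_le_rep h hsumm hhs) ?_⟩
    -- tsum ≤ ‖w‖
    rw [tsum_eq_sum hnorm0, sum_extend_emb' e (fun k => ‖xseq k‖ * ‖yseq k‖)
      (fun i => (c * wgt i) * (‖((p i).1 : X)‖ * ‖((p i).2 : Y)‖))
      (fun i => by
        simp only [hx1, hy1]
        rw [norm_smul, Real.norm_eq_abs,
          abs_of_nonneg (mul_nonneg hc.le (hwgt0 i)), mul_assoc])]
    calc ∑ i : ι, (c * wgt i) * (‖((p i).1 : X)‖ * ‖((p i).2 : Y)‖)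
        ≤ ∑ i : ι, c * wgt i := by
          refine Finset.sum_le_sum fun i _ => ?_
          have h1 : ‖((p i).1 : X)‖ * ‖((p i).2 : Y)‖ ≤ 1 :=
            mul_le_one₀ (hpm i) (norm_nonneg _) (hpn i)
          have h2 : 0 ≤ c * wgt i := mul_nonneg hc.le (hwgt0 i)
          nlinarith
      _ = c := by rw [← Finset.mul_sum, hwgt1, mul_one]

end Attains

/-- If `X` and `Y` both satisfy the metric π-property, then the set of
norm-attaining tensors is dense in `X ⊗π Y`. -/
theorem tensor_normAttaining_dense_of_metricPi_metricPi
    {X Y Z : Type*} [NormedAddCommGroup X] [NormedSpace ℝ X] [CompleteSpace X]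
    [NormedAddCommGroup Y] [NormedSpace ℝ Y] [CompleteSpace Y]
    [NormedAddCommGroup Z] [NormedSpace ℝ Z] [CompleteSpace Z]
    (t : X →L[ℝ] Y →L[ℝ] Z) (lift : (X →L[ℝ] (Y →L[ℝ] ℝ)) → (Z →L[ℝ] ℝ))
    (h : IsProjTensorProduct X Y Z t lift)
    (hX : MetricPiProperty X) (hY : MetricPiProperty Y) :
    Dense {z : Z | AttainsProjNorm t z} := by
  classical
  rw [Metric.dense_iff]
  intro z ε hε
  obtain ⟨x, y, hs, hz⟩ := h.exists_rep z
  -- choose a partial sum close to z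
  obtain ⟨k, hk⟩ := (Metric.tendsto_atTop.1 hz.tendsto_sum_nat) (ε/2) (by linarith)
  have hk2 : dist (∑ i ∈ Finset.range k, t (x i) (y i)) z < ε/2 := hk k le_rfl
  set S : ℝ := (∑ i ∈ Finset.range k, ‖x i‖ * ‖y i‖) + 1 with hS
  have hS0 : 0 < S := by
    have : 0 ≤ ∑ i ∈ Finset.range k, ‖x i‖ * ‖y i‖ :=
      Finset.sum_nonneg fun i _ => by positivity
    linarith
  set ε' : ℝ := min 1 (ε/(8*S)) with hε'
  have hε'0 : 0 < ε' := lt_min one_pos (by positivity)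
  have hε'1 : ε' ≤ 1 := min_le_left _ _
  have hε'2 : ε' ≤ ε/(8*S) := min_le_right _ _
  -- finsets of normalized vectors
  set sX : Finset X := ((Finset.range k).image fun i => ‖x i‖⁻¹ • x i).filter
    (fun v => ‖v‖ = 1) with hsX
  set sY : Finset Y := ((Finset.range k).image fun i => ‖y i‖⁻¹ • y i).filter
    (fun v => ‖v‖ = 1) with hsY
  obtain ⟨P, hP, hPn, hPf, happX⟩ := hX ε' hε'0 sX (fun v hv => (Finset.mem_filter.1 hv).2)
  obtain ⟨Q, hQ, hQn, hQf, happY⟩ := hY ε' hε'0 sY (fun v hv => (Finset.mem_filter.1 hv).2)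
  -- choose approximations
  have hxt : ∀ i ∈ Finset.range k, ∃ v, v ∈ LinearMap.range (P : X →ₗ[ℝ] X) ∧
      ‖x i - v‖ ≤ ε' * ‖x i‖ ∧ ‖v‖ ≤ 2 * ‖x i‖ := by
    intro i hi
    by_cases h0 : x i = 0
    · exact ⟨0, Submodule.zero_mem _, by simp [h0], by simp⟩
    · have hnx : ‖x i‖ ≠ 0 := norm_ne_zero_iff.2 h0
      have hmem : ‖x i‖⁻¹ • x i ∈ sX := by
        refine Finset.mem_filter.2 ⟨Finset.mem_image.2 ⟨i, hi, rfl⟩, ?_⟩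
        rw [norm_smul, norm_inv, norm_norm, inv_mul_cancel₀ hnx]
      obtain ⟨v, hvmem, hv⟩ := happX _ hmem
      refine ⟨‖x i‖ • v, Submodule.smul_mem _ _ hvmem, ?_, ?_⟩
      · have : x i - ‖x i‖ • v = ‖x i‖ • (‖x i‖⁻¹ • x i - v) := by
          rw [smul_sub, smul_smul, mul_inv_cancel₀ hnx, one_smul]
        rw [this, norm_smul, norm_norm, mul_comm]
        exact mul_le_mul_of_nonneg_right hv.le (norm_nonneg _)
      · have hu1 : ‖‖x i‖⁻¹ • x i‖ = 1 := by
          rw [norm_smul, norm_inv, norm_norm, inv_mul_cancel₀ hnx]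
        have hv2 : ‖v‖ ≤ 2 := by
          have h1 := norm_sub_norm_le v (‖x i‖⁻¹ • x i)
          rw [norm_sub_rev] at h1
          linarith [hv.le, hε'1, h1, hu1.le, hu1.ge]
        rw [norm_smul, norm_norm, mul_comm]
        exact mul_le_mul_of_nonneg_right hv2 (norm_nonneg _)
  have hyt : ∀ i ∈ Finset.range k, ∃ v, v ∈ LinearMap.range (Q : Y →ₗ[ℝ] Y) ∧
      ‖y i - v‖ ≤ ε' * ‖y i‖ ∧ ‖v‖ ≤ 2 * ‖y i‖ := by
    intro i hi
    by_cases h0 : y i = 0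
    · exact ⟨0, Submodule.zero_mem _, by simp [h0], by simp⟩
    · have hnx : ‖y i‖ ≠ 0 := norm_ne_zero_iff.2 h0
      have hmem : ‖y i‖⁻¹ • y i ∈ sY := by
        refine Finset.mem_filter.2 ⟨Finset.mem_image.2 ⟨i, hi, rfl⟩, ?_⟩
        rw [norm_smul, norm_inv, norm_norm, inv_mul_cancel₀ hnx]
      obtain ⟨v, hvmem, hv⟩ := happY _ hmem
      refine ⟨‖y i‖ • v, Submodule.smul_mem _ _ hvmem, ?_, ?_⟩
      · have : y i - ‖y i‖ • v = ‖y i‖ • (‖y i‖⁻¹ • y i - v) := by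
          rw [smul_sub, smul_smul, mul_inv_cancel₀ hnx, one_smul]
        rw [this, norm_smul, norm_norm, mul_comm]
        exact mul_le_mul_of_nonneg_right hv.le (norm_nonneg _)
      · have hu1 : ‖‖y i‖⁻¹ • y i‖ = 1 := by
          rw [norm_smul, norm_inv, norm_norm, inv_mul_cancel₀ hnx]
        have hv2 : ‖v‖ ≤ 2 := by
          have h1 := norm_sub_norm_le v (‖y i‖⁻¹ • y i)
          rw [norm_sub_rev] at h1
          linarith [hv.le, hε'1, h1, hu1.le, hu1.ge]
        rw [norm_smul, norm_norm, mul_comm]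
        exact mul_le_mul_of_nonneg_right hv2 (norm_nonneg _)
  -- make total choice functions
  have hxt' : ∀ i : ℕ, ∃ v, v ∈ LinearMap.range (P : X →ₗ[ℝ] X) ∧
      (i ∈ Finset.range k → (‖x i - v‖ ≤ ε' * ‖x i‖ ∧ ‖v‖ ≤ 2 * ‖x i‖)) := by
    intro i
    by_cases hi : i ∈ Finset.range k
    · obtain ⟨v, h1, h2, h3⟩ := hxt i hi
      exact ⟨v, h1, fun _ => ⟨h2, h3⟩⟩
    · exact ⟨0, Submodule.zero_mem _, fun hc => absurd hc hi⟩
  have hyt' : ∀ i : ℕ, ∃ v, v ∈ LinearMap.range (Q : Y →ₗ[ℝ] Y) ∧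
      (i ∈ Finset.range k → (‖y i - v‖ ≤ ε' * ‖y i‖ ∧ ‖v‖ ≤ 2 * ‖y i‖)) := by
    intro i
    by_cases hi : i ∈ Finset.range k
    · obtain ⟨v, h1, h2, h3⟩ := hyt i hi
      exact ⟨v, h1, fun _ => ⟨h2, h3⟩⟩
    · exact ⟨0, Submodule.zero_mem _, fun hc => absurd hc hi⟩
  choose xt hxtmem hxtb using hxt'
  choose yt hytmem hytb using hyt'
  set z' : Z := ∑ i ∈ Finset.range k, t (xt i) (yt i) with hz'
  have hattain : AttainsProjNorm t z' := by
    refine attains_of_mem_span h P Q hP hPn hPf hQ hQn hQf ?_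
    exact Submodule.sum_mem _ fun i _ => Submodule.subset_span
      (Set.mem_image2_of_mem (hxtmem i) (hytmem i))
  have hdiff : ‖(∑ i ∈ Finset.range k, t (x i) (y i)) - z'‖
      ≤ (3*ε') * ∑ i ∈ Finset.range k, ‖x i‖ * ‖y i‖ := by
    rw [hz', ← Finset.sum_sub_distrib, Finset.mul_sum]
    refine (norm_sum_le _ _).trans (Finset.sum_le_sum fun i hi => ?_)
    obtain ⟨hb1, hb2⟩ := hxtb i hi
    obtain ⟨hc1, hc2⟩ := hytb i hi
    have hsplit : t (x i) (y i) - t (xt i) (yt i)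
        = t (x i - xt i) (y i) + t (xt i) (y i - yt i) := by
      simp only [map_sub, ContinuousLinearMap.sub_apply]
      abel
    rw [hsplit]
    have e1 : ‖x i - xt i‖ * ‖y i‖ ≤ (ε' * ‖x i‖) * ‖y i‖ :=
      mul_le_mul_of_nonneg_right hb1 (norm_nonneg _)
    have e2 : ‖xt i‖ * ‖y i - yt i‖ ≤ (2 * ‖x i‖) * (ε' * ‖y i‖) :=
      mul_le_mul hb2 hc1 (norm_nonneg _) (by positivity)
    calc ‖t (x i - xt i) (y i) + t (xt i) (y i - yt i)‖
        ≤ ‖t (x i - xt i) (y i)‖ + ‖t (xt i) (y i - yt i)‖ := norm_add_le _ _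
      _ ≤ ‖x i - xt i‖ * ‖y i‖ + ‖xt i‖ * ‖y i - yt i‖ :=
          add_le_add (h.norm_tmul_le _ _) (h.norm_tmul_le _ _)
      _ ≤ 3 * ε' * (‖x i‖ * ‖y i‖) := by nlinarith [e1, e2]
  have hdiff2 : ‖(∑ i ∈ Finset.range k, t (x i) (y i)) - z'‖ < ε/2 := by
    have hsum_eq : ∑ i ∈ Finset.range k, ‖x i‖ * ‖y i‖ = S - 1 := by rw [hS]; ring
    rw [hsum_eq] at hdiff
    have hS1 : 0 ≤ S - 1 := by
      rw [hS]
      have : 0 ≤ ∑ i ∈ Finset.range k, ‖x i‖ * ‖y i‖ :=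
        Finset.sum_nonneg fun i _ => by positivity
      linarith
    have h1 : (3*ε') * (S - 1) ≤ (3*(ε/(8*S))) * (S - 1) := by nlinarith
    have h2 : (3*(ε/(8*S))) * (S - 1) < ε/2 := by
      have hrw : (3*(ε/(8*S))) * (S - 1) = (3 * ε * (S-1)) / (8*S) := by ring
      rw [hrw, div_lt_iff₀ (by positivity : (0:ℝ) < 8*S)]
      nlinarith
    exact lt_of_le_of_lt (hdiff.trans h1) h2
  refine ⟨z', Set.mem_inter (Metric.mem_ball.2 ?_) hattain⟩
  have htri := dist_triangle z' (∑ i ∈ Finset.range k, t (x i) (y i)) z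
  have : dist z' (∑ i ∈ Finset.range k, t (x i) (y i)) < ε/2 := by
    rw [dist_eq_norm, norm_sub_rev]
    exact hdiff2
  linarith
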